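/- Let ρ: g → gl(V) be a representation of a finite-dimensional Lie algebra g, with trace form B_ρ(x,y) = tr(ρ(x)ρ(y)). Define the induced trace form on the Nahm algebra by C_ρ(X,Y) = tr(L_ρ(X)L_ρ(Y)), where L_ρ(X) is the block operator on V³ with blocks (L_ρ(X))₁₂ = -½ρ(x₃), (L_ρ(X))₁₃ = ½ρ(x₂), (L_ρ(X))₂₁ = ½ρ(x₃), (L_ρ(X))₂₃ = -½ρ(x₁), (L_ρ(X))₃₁ = -½ρ(x₂), (L_ρ(X))₃₂ = ½ρ(x₁), and zero diagonal blocks. Then C_ρ(X,Y) = -½(B_ρ(x₁,y₁) + B_ρ(x₂,y₂) + B_ρ(x₃,y₃)). -/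

import Mathlib

lemma trace_pi_eq {𝕜 : Type*} [RCLike 𝕜] {V : Type*} [AddCommGroup V] [Module 𝕜 V]
    [FiniteDimensional 𝕜 V] (f : (Fin 3 → V) →ₗ[𝕜] (Fin 3 → V)) :
    LinearMap.trace 𝕜 (Fin 3 → V) f =
      ∑ i : Fin 3, LinearMap.trace 𝕜 V
        ((LinearMap.proj i : (Fin 3 → V) →ₗ[𝕜] V) ∘ₗ f ∘ₗ LinearMap.single 𝕜 (fun _ => V) i) := by
  have hid : (∑ i : Fin 3, LinearMap.single 𝕜 (fun _ => V) i ∘ₗ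
      (LinearMap.proj i : (Fin 3 → V) →ₗ[𝕜] V)) = LinearMap.id := by
    ext i x j
    fin_cases i <;> fin_cases j <;>
      simp [Fin.sum_univ_three, Pi.single_apply]
  have hf : f = ∑ i : Fin 3, (LinearMap.single 𝕜 (fun _ => V) i ∘ₗ
      (LinearMap.proj i : (Fin 3 → V) →ₗ[𝕜] V)) ∘ₗ f := by
    have : (∑ i : Fin 3, (LinearMap.single 𝕜 (fun _ => V) i ∘ₗ
        (LinearMap.proj i : (Fin 3 → V) →ₗ[𝕜] V))) ∘ₗ f
        = ∑ i : Fin 3, (LinearMap.single 𝕜 (fun _ => V) i ∘ₗ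
        (LinearMap.proj i : (Fin 3 → V) →ₗ[𝕜] V)) ∘ₗ f := rfl
    rw [← this, hid, LinearMap.id_comp]
  conv_lhs => rw [hf]
  rw [map_sum]
  refine Finset.sum_congr rfl fun i _ => ?_
  rw [LinearMap.comp_assoc, LinearMap.trace_comp_comm', ← LinearMap.comp_assoc]

attribute [local instance] LieRing.ofAssociativeRing

/-- The block operator `L_ρ(X)` on `V³` induced by a representation `ρ` of a Lie
algebra: its `(i, i+1)` block is `-½ρ(x_{i+2})` and its `(i, i+2)` block is `½ρ(x_{i+1})`. -/
def Lrho (𝕜 : Type*) [RCLike 𝕜] {L V : Type*} [LieRing L] [LieAlgebra 𝕜 L]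
    [AddCommGroup V] [Module 𝕜 V] (ρ : L →ₗ⁅𝕜⁆ Module.End 𝕜 V) (X : Fin 3 → L) :
    (Fin 3 → V) →ₗ[𝕜] (Fin 3 → V) :=
  (2 : 𝕜)⁻¹ • LinearMap.pi fun i =>
    (ρ (X (i + 1))).comp (LinearMap.proj (i + 2) : (Fin 3 → V) →ₗ[𝕜] V) -
      (ρ (X (i + 2))).comp (LinearMap.proj (i + 1) : (Fin 3 → V) →ₗ[𝕜] V)

theorem nahm_trace_form_eq (𝕜 : Type*) [RCLike 𝕜] (L : Type*) [LieRing L] [LieAlgebra 𝕜 L]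
    (V : Type*) [AddCommGroup V] [Module 𝕜 V] [FiniteDimensional 𝕜 V]
    (ρ : L →ₗ⁅𝕜⁆ Module.End 𝕜 V) (X Y : Fin 3 → L) :
    LinearMap.trace 𝕜 (Fin 3 → V) ((Lrho 𝕜 ρ X) ∘ₗ (Lrho 𝕜 ρ Y)) =
      -(2 : 𝕜)⁻¹ * ∑ i : Fin 3, LinearMap.trace 𝕜 V (ρ (X i) ∘ₗ ρ (Y i)) := by
  have hblock : ∀ i : Fin 3,
      (LinearMap.proj i : (Fin 3 → V) →ₗ[𝕜] V) ∘ₗ ((Lrho 𝕜 ρ X) ∘ₗ (Lrho 𝕜 ρ Y)) ∘ₗ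
        LinearMap.single 𝕜 (fun _ => V) i =
      (-((2:𝕜)⁻¹ * (2:𝕜)⁻¹)) • ((ρ (X (i+1)) ∘ₗ ρ (Y (i+1))) + (ρ (X (i+2)) ∘ₗ ρ (Y (i+2)))) := by
    intro i
    ext v
    fin_cases i <;>
      simp [Lrho, Pi.single_apply, smul_sub, smul_add, mul_smul] <;>
      abel
  rw [trace_pi_eq]
  simp only [hblock, map_smul, map_add]
  rw [Fin.sum_univ_three]
  have h0 : ((0:Fin 3)+1) = 1 := rfl
  have h1 : ((0:Fin 3)+2) = 2 := rfl
  have h2 : ((1:Fin 3)+1) = 2 := rfl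
  have h3 : ((1:Fin 3)+2) = 0 := rfl
  have h4 : ((2:Fin 3)+1) = 0 := rfl
  have h5 : ((2:Fin 3)+2) = 1 := rfl
  rw [h0, h1, h2, h3, h4, h5, Fin.sum_univ_three]
  rw [smul_eq_mul, smul_eq_mul, smul_eq_mul]
  ring
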